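/- For every graph G and k, q ≥ 1: if G admits a k-pebble forest cover of depth at most q, then G has treewidth at most k-1 and treedepth at most q. -/

import Mathlib

/-- A tree-decomposition of a graph `G`. -/
structure TreeDecomp {V : Type*} (G : SimpleGraph V) where
  T : Type
  TFin : Fintype T
  TG : SimpleGraph T
  isTree : TG.IsTree
  bag : T → Set V
  coversVerts : ∀ v : V, ∃ t, v ∈ bag t
  coversEdges : ∀ u v : V, G.Adj u v → ∃ t, u ∈ bag t ∧ v ∈ bag t
  bagsConnected : ∀ v : V, (TG.induce {t | v ∈ bag t}).Connected

/-- A forest order: a partial order whose down-sets are chains. -/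
def ForestOrder {V : Type*} (le : V → V → Prop) : Prop :=
  (∀ v, le v v) ∧ (∀ u v, le u v → le v u → u = v) ∧
  (∀ u v w, le u v → le v w → le u w) ∧
  (∀ u v w, le u w → le v w → (le u v ∨ le v u))

/-- A forest cover of `G`. -/
def IsForestCover {V : Type*} (G : SimpleGraph V) (le : V → V → Prop) : Prop :=
  ForestOrder le ∧ ∀ u v, G.Adj u v → (le u v ∨ le v u)

open SimpleGraph

private lemma acyclic_of_level {T : Type*} {H : SimpleGraph T} (ℓ : T → ℕ)
    (hlev : ∀ a b, H.Adj a b → ℓ a + 1 = ℓ b ∨ ℓ b + 1 = ℓ a)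
    (hpar : ∀ a b c, H.Adj a b → H.Adj a c → ℓ b < ℓ a → ℓ c < ℓ a → b = c) :
    H.IsAcyclic := by
  classical
  have aux : ∀ (m : T) (c : H.Walk m m), c.IsCycle →
      (∀ x ∈ c.support.tail, ℓ x ≤ ℓ m) → False := by
    intro m c hc hmax
    cases c with
    | nil => exact Walk.IsCycle.not_of_nil hc
    | cons h q =>
      rename_i b
      have htail : (Walk.cons h q).support.tail = q.support := by
        simp [Walk.support_cons]
      have hb : ℓ b < ℓ m := by
        have hble : ℓ b ≤ ℓ m := by
          apply hmax; rw [htail]; exact q.start_mem_support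
        rcases hlev m b h with h1 | h1 <;> omega
      obtain ⟨x, q', h', heq⟩ := Walk.exists_cons_eq_concat h q
      have hsups : m :: q.support = q'.support ++ [m] := by
        have := congrArg Walk.support heq
        simpa [Walk.support_cons, Walk.support_concat, List.concat_eq_append] using this
      have hxq : x ∈ q.support := by
        have hx' : x ∈ q'.support := q'.end_mem_support
        have : x ∈ m :: q.support := by rw [hsups]; exact List.mem_append_left _ hx'
        rcases List.mem_cons.1 this with rfl | hmem
        · exact absurd h' (H.irrefl)
        · exact hmem
      have hx : ℓ x < ℓ m := by
        have hxle : ℓ x ≤ ℓ m := by apply hmax; rw [htail]; exact hxq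
        rcases hlev x m h' with h1 | h1 <;> omega
      have hbx : b = x := hpar m b x h h'.symm hb hx
      subst hbx
      have hnodup : q.support.Nodup := by
        have := hc.2
        rwa [htail] at this
      have hqs : q.support = q'.support.tail ++ [m] := by
        have h2 := hsups
        rw [q'.support_eq_cons] at h2
        rw [List.cons_append] at h2
        exact (List.cons.inj h2).2
      rcases ht : q'.support.tail with _ | ⟨a, t⟩
      · rw [ht] at hqs
        simp at hqs
        have hbm : b = m := by
          have h3 := q.support_eq_cons
          rw [hqs] at h3
          exact (List.cons_eq_cons.1 h3.symm).1
        exact absurd (hbm ▸ h) (H.irrefl)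
      · have hab : b = a := by
          rw [ht] at hqs
          have h3 := q.support_eq_cons
          rw [h3] at hqs
          exact (List.cons_eq_cons.1 hqs.symm).1.symm
        subst hab
        rw [ht] at hqs
        have h1 : q'.support.getLast? = some b := by
          rw [List.getLast?_eq_getLast_of_ne_nil (q'.support_ne_nil)]
          exact congrArg some q'.getLast_support
        have h2 : q'.support = m :: b :: t := by rw [q'.support_eq_cons, ht]
        rw [h2, List.getLast?_cons_cons] at h1
        cases t with
        | nil =>
          have hlen3 := hc.three_le_length
          have hl1 : q'.support.length = q'.length + 1 := q'.length_support
          rw [h2] at hl1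
          simp at hl1
          have hl2 : (Walk.cons h q).length = q'.length + 1 := by
            rw [heq, Walk.length_concat]
          simp [Walk.length_cons] at hl2 hlen3
          omega
        | cons c' t' =>
          rw [List.getLast?_cons_cons] at h1
          have hmem : b ∈ c' :: t' := by
            have h4 := List.dropLast_append_getLast? b
              (show b ∈ (c' :: t').getLast? from by rw [h1]; rfl)
            rw [← h4]
            exact List.mem_append_right _ (List.mem_singleton_self b)
          rw [hqs] at hnodup
          have : b ∉ (c' :: t') ++ [m] := (List.nodup_cons.1 hnodup).1
          exact this (List.mem_append_left _ hmem)
  intro v c hc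
  have hne : c.support.tail ≠ [] := by
    have h3 := hc.three_le_length
    have h5 : c.support.length = c.length + 1 := c.length_support
    have h6 : c.support.length = c.support.tail.length + 1 := by
      conv_lhs => rw [c.support_eq_cons]
      simp
    intro h0
    rw [h0] at h6
    simp only [List.length_nil] at h6
    omega
  obtain ⟨m, hm, hmax⟩ := Finset.exists_max_image c.support.tail.toFinset ℓ
    (by rwa [List.toFinset_nonempty_iff])
  rw [List.mem_toFinset] at hm
  have hmc : m ∈ c.support := by rw [c.support_eq_cons]; exact List.mem_cons_of_mem _ hm
  refine aux m (c.rotate m hmc) (hc.rotate hmc) ?_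
  intro x hx
  have hperm := c.support_rotate m hmc
  have hx' : x ∈ c.support.tail := hperm.mem_iff.1 hx
  exact hmax x (List.mem_toFinset.2 hx')

namespace PebbleAux

variable {W : Type*} (le : W → W → Prop)

/-- depth of a vertex in the forest order -/
noncomputable def dep (v : W) : ℕ := Set.ncard {u | le u v}

open Classical in
/-- parent of a vertex -/
noncomputable def par (v : W) : Option W :=
  if h : ∃ u, le u v ∧ u ≠ v ∧ dep le u + 1 = dep le v ∧ ∀ x, le x v → x ≠ v → le x u
  then some h.choose else none

/-- level function on the tree -/
noncomputable def lev : Option W → ℕ := fun t => t.elim 0 (dep le)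

/-- the decomposition tree: vertices are `Option W`, with `none` an added root -/
noncomputable def tg : SimpleGraph (Option W) :=
  SimpleGraph.fromRel (fun a b => ∃ v, b = some v ∧ a = par le v)

/-- the bags -/
def bagFun {k : ℕ} (p : W → Fin k) : Option W → Set W
  | none => ∅
  | some v => {u | le u v ∧ ∀ w, le u w → le w v → w ≠ u → p w ≠ p u}

end PebbleAux

private theorem build_decomp {W : Type} [Fintype W] (G : SimpleGraph W) (k : ℕ)
    (le : W → W → Prop) (p : W → Fin k)
    (hfo : ForestOrder le)
    (hedge : ∀ u v, G.Adj u v → le u v ∨ le v u)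
    (hpeb : ∀ u v, G.Adj u v → le u v → u ≠ v →
      ∀ w, le u w → u ≠ w → le w v → p u ≠ p w) :
    ∃ D : TreeDecomp G, ∀ t : D.T, Set.ncard (D.bag t) ≤ k := by
  classical
  obtain ⟨hrefl, hanti, htrans, hcomp⟩ := hfo
  set d := PebbleAux.dep le with hd_def
  -- basic facts about dep
  have hd1 : ∀ v, 1 ≤ d v := by
    intro v
    have : 0 < d v := by
      rw [hd_def, PebbleAux.dep, Set.ncard_pos (Set.toFinite _)]
      exact ⟨v, hrefl v⟩
    omega
  have hsub : ∀ a b, le a b → {u | le u a} ⊆ {u | le u b} := by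
    intro a b hab u hu
    exact htrans u a b hu hab
  have hmono : ∀ a b, le a b → d a ≤ d b := by
    intro a b hab
    exact Set.ncard_le_ncard (hsub a b hab) (Set.toFinite _)
  have heqd : ∀ a b, le a b → d a = d b → a = b := by
    intro a b hab hd
    have hEq : {u | le u a} = {u | le u b} :=
      Set.eq_of_subset_of_ncard_le (hsub a b hab) (le_of_eq hd.symm) (Set.toFinite _)
    have : b ∈ {u | le u a} := by rw [hEq]; exact hrefl b
    exact hanti a b hab this
  have hltd : ∀ a b, le a b → a ≠ b → d a < d b := by
    intro a b hab hne
    apply Set.ncard_lt_ncard _ (Set.toFinite _)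
    refine ⟨hsub a b hab, fun hsub' => ?_⟩
    have : b ∈ {u | le u a} := hsub' (hrefl b)
    exact hne (hanti a b hab this)
  -- existence of parents
  have hpex : ∀ v, 2 ≤ d v →
      ∃ u, le u v ∧ u ≠ v ∧ d u + 1 = d v ∧ ∀ x, le x v → x ≠ v → le x u := by
    intro v hv
    set S : Set W := {x | le x v ∧ x ≠ v} with hS_def
    have hSne : S.Nonempty := by
      obtain ⟨b, hb, hbne⟩ := Set.exists_ne_of_one_lt_ncard
        (show 1 < Set.ncard {u | le u v} from hv) v
      exact ⟨b, hb, hbne⟩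
    obtain ⟨u, huS, humax'⟩ := Set.Finite.exists_maximalFor d S (Set.toFinite S) hSne
    have humax : ∀ x ∈ S, d u ≤ d x → d u = d x := fun x hx h => le_antisymm h (humax' hx h)
    have hmaxS : ∀ x ∈ S, le x u := by
      intro x hx
      rcases hcomp x u v hx.1 huS.1 with h | h
      · exact h
      · have := humax x hx (hmono u x h)
        have := heqd u x h this
        rw [← this]
        exact hrefl u
    have hset : {x | le x u} = {x | le x v} \ {v} := by
      ext x
      constructor
      · intro hx
        refine ⟨htrans x u v hx huS.1, fun hxv => ?_⟩
        simp only [Set.mem_singleton_iff] at hxv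
        subst hxv
        exact huS.2 (hanti u x huS.1 hx)
      · intro ⟨hx1, hx2⟩
        simp only [Set.mem_singleton_iff] at hx2
        exact hmaxS x ⟨hx1, hx2⟩
    have hdu : d u + 1 = d v := by
      have h1 : d u = d v - 1 := by
        show Set.ncard {x | le x u} = Set.ncard {x | le x v} - 1
        rw [hset, Set.ncard_diff_singleton_of_mem
          (show v ∈ {x | le x v} from hrefl v)]
      have := hd1 v
      omega
    exact ⟨u, huS.1, huS.2, hdu, fun x h1 h2 => hmaxS x ⟨h1, h2⟩⟩
  -- the parent function
  have hparsome : ∀ v, 2 ≤ d v → ∃ u, PebbleAux.par le v = some u ∧ le u v ∧ u ≠ v ∧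
      d u + 1 = d v ∧ ∀ x, le x v → x ≠ v → le x u := by
    intro v hv
    have hcond := hpex v hv
    refine ⟨hcond.choose, ?_, hcond.choose_spec⟩
    rw [PebbleAux.par, dif_pos hcond]
  have hlevsome : ∀ v : W, PebbleAux.lev le (some v) = d v := fun v => rfl
  have hlevpar : ∀ v, PebbleAux.lev le (PebbleAux.par le v) + 1 = d v := by
    intro v
    by_cases hv : 2 ≤ d v
    · obtain ⟨u, hu, _, _, hdu, _⟩ := hparsome v hv
      rw [hu, hlevsome]
      exact hdu
    · have h1 : d v = 1 := by have := hd1 v; omega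
      have hnone : PebbleAux.par le v = none := by
        rw [PebbleAux.par, dif_neg]
        rintro ⟨u, h1', h2', h3', _⟩
        have := hltd u v h1' h2'
        have := hd1 u
        omega
      rw [hnone]
      simpa [PebbleAux.lev] using h1.symm
  -- adjacency facts
  have hadjlev : ∀ a b, (PebbleAux.tg le).Adj a b →
      PebbleAux.lev le a + 1 = PebbleAux.lev le b ∨
      PebbleAux.lev le b + 1 = PebbleAux.lev le a := by
    intro a b hab
    rw [PebbleAux.tg, SimpleGraph.fromRel_adj] at hab
    rcases hab.2 with ⟨v, rfl, rfl⟩ | ⟨v, rfl, rfl⟩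
    · left; rw [hlevsome]; exact hlevpar v
    · right; rw [hlevsome]; exact hlevpar v
  have hparu : ∀ a b c, (PebbleAux.tg le).Adj a b → (PebbleAux.tg le).Adj a c →
      PebbleAux.lev le b < PebbleAux.lev le a → PebbleAux.lev le c < PebbleAux.lev le a →
      b = c := by
    intro a b c hab hac hb hc
    rw [PebbleAux.tg, SimpleGraph.fromRel_adj] at hab hac
    rcases hab.2 with ⟨v, rfl, rfl⟩ | ⟨v, hv, rfl⟩
    · exfalso
      have := hlevpar v
      rw [hlevsome] at hb
      omega
    · rcases hac.2 with ⟨v', rfl, rfl⟩ | ⟨v', hv', rfl⟩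
      · exfalso
        have := hlevpar v'
        rw [hlevsome] at hc
        omega
      · rw [hv'] at hv
        rw [Option.some_inj.1 hv]
  have hadjp : ∀ v, (PebbleAux.tg le).Adj (PebbleAux.par le v) (some v) := by
    intro v
    rw [PebbleAux.tg, SimpleGraph.fromRel_adj]
    constructor
    · intro hEq
      have h1 := hlevpar v
      rw [hEq, hlevsome] at h1
      omega
    · exact Or.inl ⟨v, rfl, rfl⟩
  -- connectivity
  have hreach : ∀ t, (PebbleAux.tg le).Reachable t none := by
    have key : ∀ n (t : Option W), PebbleAux.lev le t ≤ n →
        (PebbleAux.tg le).Reachable t none := by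
      intro n
      induction n with
      | zero =>
        intro t ht
        match t with
        | none => exact Reachable.refl none
        | some v =>
          exfalso
          rw [hlevsome] at ht
          have := hd1 v
          omega
      | succ n ih =>
        intro t ht
        match t with
        | none => exact Reachable.refl none
        | some v =>
          have h1 := hlevpar v
          rw [hlevsome] at ht
          refine ((hadjp v).reachable.symm).trans (ih _ ?_)
          omega
    exact fun t => key (PebbleAux.lev le t) t le_rfl
  have hconn : (PebbleAux.tg le).Connected := by
    rw [connected_iff_exists_forall_reachable]
    exact ⟨none, fun w => (hreach w).symm⟩
  have htree : (PebbleAux.tg le).IsTree :=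
    ⟨hconn, acyclic_of_level (PebbleAux.lev le) hadjlev hparu⟩
  -- bag facts
  have hself : ∀ v, v ∈ PebbleAux.bagFun le p (some v) := by
    intro v
    refine ⟨hrefl v, fun w h1 h2 hne => absurd (hanti w v h2 (by exact h1)) hne⟩
  -- build the tree decomposition
  refine ⟨⟨Option W, inferInstance, PebbleAux.tg le, htree, PebbleAux.bagFun le p,
    ?_, ?_, ?_⟩, ?_⟩
  · exact fun v => ⟨some v, hself v⟩
  · -- covers edges
    intro u v huv
    rcases hedge u v huv with h | h
    · refine ⟨some v, ⟨h, ?_⟩, hself v⟩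
      intro w h1 h2 hne
      exact ((hpeb u v huv h huv.ne w h1 (Ne.symm hne) h2).symm)
    · refine ⟨some u, hself u, ⟨h, ?_⟩⟩
      intro w h1 h2 hne
      exact ((hpeb v u huv.symm h huv.symm.ne w h1 (Ne.symm hne) h2).symm)
  · -- bags connected
    intro u
    set S : Set (Option W) := {t | u ∈ PebbleAux.bagFun le p t} with hS_def
    have hSu : some u ∈ S := hself u
    have key : ∀ n (t : Option W) (ht : t ∈ S), PebbleAux.lev le t ≤ n →
        ((PebbleAux.tg le).induce S).Reachable ⟨t, ht⟩ ⟨some u, hSu⟩ := by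
      intro n
      induction n with
      | zero =>
        intro t ht hlt
        exfalso
        match t with
        | none => exact ht
        | some v =>
          rw [hlevsome] at hlt
          have := hd1 v
          omega
      | succ n ih =>
        intro t ht hlt
        match t with
        | none => exact absurd ht id
        | some v =>
          by_cases huv : u = v
          · subst huv
            exact Reachable.refl _
          · have hubag : u ∈ PebbleAux.bagFun le p (some v) := ht
            have h2v : 2 ≤ d v := by
              have := hltd u v hubag.1 huv
              have := hd1 u
              omega
            obtain ⟨w, hw, hwle, hwne, hwd, hwmax⟩ := hparsome v h2v
            have hwS : some w ∈ S := by
              refine ⟨hwmax u hubag.1 huv, fun x hx1 hx2 hx3 => ?_⟩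
              exact hubag.2 x hx1 (htrans x w v hx2 hwle) hx3
            have hadj' : ((PebbleAux.tg le).induce S).Adj ⟨some w, hwS⟩ ⟨some v, ht⟩ := by
              show (PebbleAux.tg le).Adj (some w) (some v)
              rw [← hw]
              exact hadjp v
            refine (hadj'.symm.reachable).trans (ih (some w) hwS ?_)
            rw [hlevsome] at hlt ⊢
            omega
    rw [connected_iff_exists_forall_reachable]
    refine ⟨⟨some u, hSu⟩, ?_⟩
    rintro ⟨t, ht⟩
    exact (key (PebbleAux.lev le t) t ht le_rfl).symm
  · -- bag sizes
    intro t
    match t with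
    | none => simp [PebbleAux.bagFun]
    | some v =>
      have hinj : Set.InjOn p (PebbleAux.bagFun le p (some v)) := by
        intro a ha b hb hab
        by_contra hne
        rcases hcomp a b v ha.1 hb.1 with h | h
        · exact (ha.2 b h hb.1 (Ne.symm hne)) hab.symm
        · exact (hb.2 a h ha.1 hne) hab
      calc Set.ncard (PebbleAux.bagFun le p (some v))
          = Set.ncard (p '' PebbleAux.bagFun le p (some v)) :=
            (Set.ncard_image_of_injOn hinj).symm
        _ ≤ Set.ncard (Set.univ : Set (Fin k)) :=
            Set.ncard_le_ncard (Set.subset_univ _) Set.finite_univ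
        _ = k := by rw [Set.ncard_univ]; simp

theorem pebble_forest_cover_tw_td {V : Type*} [Fintype V] (G : SimpleGraph V)
    (k q : ℕ) (hk : 1 ≤ k) (hq : 1 ≤ q)
    (le : V → V → Prop) (p : V → Fin k)
    (hfo : ForestOrder le)
    (hedge : ∀ u v, G.Adj u v → le u v ∨ le v u)
    (hpeb : ∀ u v, G.Adj u v → le u v → u ≠ v →
      ∀ w, le u w → u ≠ w → le w v → p u ≠ p w)
    (hdepth : ∀ v : V, Set.ncard {u | le u v} ≤ q) :
    (∃ D : TreeDecomp G, ∀ t : D.T, Set.ncard (D.bag t) ≤ k) ∧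
    (∃ le' : V → V → Prop, IsForestCover G le' ∧ ∀ v : V, Set.ncard {u | le' u v} ≤ q) := by
  classical
  constructor
  · -- transport to a `Type 0` vertex set via `Fintype.equivFin`
    set n := Fintype.card V with hn
    set e : V ≃ Fin n := Fintype.equivFin V with he
    set G₀ : SimpleGraph (Fin n) := G.comap (e.symm : Fin n → V) with hG₀
    set le₀ : Fin n → Fin n → Prop := fun i j => le (e.symm i) (e.symm j) with hle₀
    set p₀ : Fin n → Fin k := fun i => p (e.symm i) with hp₀
    have hG₀adj : ∀ i j, G₀.Adj i j ↔ G.Adj (e.symm i) (e.symm j) := by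
      intro i j; rw [hG₀]; exact SimpleGraph.comap_adj
    have hfo₀ : ForestOrder le₀ := by
      obtain ⟨h1, h2, h3, h4⟩ := hfo
      refine ⟨fun v => h1 _, fun u v ha hb => ?_, fun u v w ha hb => h3 _ _ _ ha hb,
        fun u v w ha hb => h4 _ _ _ ha hb⟩
      have := h2 _ _ ha hb
      exact e.symm.injective this
    have hedge₀ : ∀ u v, G₀.Adj u v → le₀ u v ∨ le₀ v u := by
      intro u v h
      exact hedge _ _ ((hG₀adj u v).1 h)
    have hpeb₀ : ∀ u v, G₀.Adj u v → le₀ u v → u ≠ v →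
        ∀ w, le₀ u w → u ≠ w → le₀ w v → p₀ u ≠ p₀ w := by
      intro u v h hle hne w hw1 hw2 hw3
      exact hpeb _ _ ((hG₀adj u v).1 h) hle (fun hEq => hne (e.symm.injective hEq))
        (e.symm w) hw1 (fun hEq => hw2 (e.symm.injective hEq)) hw3
    obtain ⟨D₀, hD₀⟩ := build_decomp G₀ k le₀ p₀ hfo₀ hedge₀ hpeb₀
    have hbagset : ∀ v : V, {t | v ∈ e.symm '' D₀.bag t} = {t | e v ∈ D₀.bag t} := by
      intro v
      ext t
      simp only [Set.mem_setOf_eq, Set.mem_image]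
      constructor
      · rintro ⟨i, hi, rfl⟩
        rwa [Equiv.apply_symm_apply]
      · intro h
        exact ⟨e v, h, Equiv.symm_apply_apply e v⟩
    refine ⟨⟨D₀.T, D₀.TFin, D₀.TG, D₀.isTree, fun t => e.symm '' D₀.bag t, ?_, ?_, ?_⟩, ?_⟩
    · intro v
      obtain ⟨t, ht⟩ := D₀.coversVerts (e v)
      exact ⟨t, ⟨e v, ht, Equiv.symm_apply_apply e v⟩⟩
    · intro u v huv
      have h0 : G₀.Adj (e u) (e v) := by
        rw [hG₀adj]
        simpa using huv
      obtain ⟨t, h1, h2⟩ := D₀.coversEdges _ _ h0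
      exact ⟨t, ⟨e u, h1, Equiv.symm_apply_apply e u⟩, ⟨e v, h2, Equiv.symm_apply_apply e v⟩⟩
    · intro v
      rw [show {t | v ∈ e.symm '' D₀.bag t} = {t | e v ∈ D₀.bag t} from hbagset v]
      exact D₀.bagsConnected (e v)
    · intro t
      rw [Set.ncard_image_of_injective _ e.symm.injective]
      exact hD₀ t
  · exact ⟨le, ⟨hfo, hedge⟩, hdepth⟩
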